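/- Let B ⊆ ℝⁿ be a compact set, let m be a finite Borel measure on ℝⁿ whose support equals B (every open set meeting B has positive m-measure), and let T : ℝⁿ → ℝ^M be a polynomial map with components T₁,…,T_M such that 0 lies in the convex hull of T(B). For an integer k ≥ 0 let Q_k = {λ ∈ ℝ^M : for every real polynomial a in n variables of total degree at most k, ∫_B (1 + ∑ᵢ λᵢTᵢ(x))·a(x)² dm(x) ≥ 0}, and let Q_k° = {y ∈ ℝ^M : ⟨λ, y⟩ ≥ −1 for all λ ∈ Q_k}. Then the convex hull of T(B) equals the closure of ⋃_{k≥0} Q_k°. -/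

import Mathlib

open MeasureTheory MvPolynomial

/-- The `k`-th relaxation `Q_k`: those `l ∈ ℝ^M` with
`∫_B (1 + ∑ᵢ lᵢ Tᵢ(x)) a(x)² dm(x) ≥ 0` for every polynomial `a` of degree at most `k`. -/
def Qset {n M : ℕ} (B : Set (Fin n → ℝ)) (μ : Measure (Fin n → ℝ))
    (T : Fin M → MvPolynomial (Fin n) ℝ) (k : ℕ) : Set (Fin M → ℝ) :=
  {l | ∀ a : MvPolynomial (Fin n) ℝ, a.totalDegree ≤ k →
    0 ≤ ∫ x in B, (1 + ∑ i, l i * eval x (T i)) * (eval x a) ^ 2 ∂μ}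

/-- The polar of a subset `S ⊆ ℝ^M`: all `y` with `⟨s, y⟩ ≥ −1` for every `s ∈ S`. -/
def polarSet {M : ℕ} (S : Set (Fin M → ℝ)) : Set (Fin M → ℝ) :=
  {y | ∀ l ∈ S, -1 ≤ ∑ i, l i * y i}

/-! ### Auxiliary lemmas -/

/-- Halfspaces defined by the bilinear pairing are convex. -/
lemma convex_pairing_halfspace {M : ℕ} (v : Fin M → ℝ) :
    Convex ℝ {z : Fin M → ℝ | -1 ≤ ∑ i, z i * v i} := by
  intro a ha b hb p q hp hq hpq
  simp only [Set.mem_setOf_eq] at ha hb ⊢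
  have hsum : ∑ i, (p • a + q • b) i * v i
      = p * ∑ i, a i * v i + q * ∑ i, b i * v i := by
    rw [Finset.mul_sum, Finset.mul_sum, ← Finset.sum_add_distrib]
    refine Finset.sum_congr rfl fun i _ => ?_
    simp only [Pi.add_apply, Pi.smul_apply, smul_eq_mul]; ring
  rw [hsum]; nlinarith

/-- Separation of a point from a closed convex set containing `0`, phrased with the
coordinate pairing. -/
lemma sep_lemma {M : ℕ} {Q : Set (Fin M → ℝ)} (hQ : Convex ℝ Q) (hQc : IsClosed Q)
    (h0 : (0 : Fin M → ℝ) ∈ Q) {m : Fin M → ℝ} (hm : m ∉ Q) :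
    ∃ v : Fin M → ℝ, (∀ q ∈ Q, -1 ≤ ∑ i, q i * v i) ∧ ∑ i, m i * v i < -1 := by
  obtain ⟨f, u, hfu, hum⟩ := geometric_hahn_banach_closed_point hQ hQc hm
  have hu : 0 < u := by simpa using hfu 0 h0
  have hf : ∀ z : Fin M → ℝ, f z = ∑ i, z i * f (Pi.single i 1) := by
    intro z
    conv_lhs => rw [pi_eq_sum_univ z]
    rw [map_sum]
    refine Finset.sum_congr rfl fun i _ => ?_
    rw [show (z i • fun j => if i = j then (1:ℝ) else 0) = z i • (Pi.single i 1 : Fin M → ℝ) by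
      ext j; simp [Pi.single_apply, eq_comm]]
    rw [ContinuousLinearMap.map_smul, smul_eq_mul]
  have key : ∀ z : Fin M → ℝ, ∑ i, z i * (-(f (Pi.single i 1)) / u) = -(f z)/u := by
    intro z
    rw [hf z, neg_div, Finset.sum_div, ← Finset.sum_neg_distrib]
    congr 1; ext i; ring
  refine ⟨fun i => -(f (Pi.single i 1)) / u, ?_, ?_⟩
  · intro q hq
    have h1 := hfu q hq
    rw [key q, le_div_iff₀ hu]
    linarith
  · rw [key m, div_lt_iff₀ hu]
    linarith

lemma convex_polarSet {M : ℕ} (S : Set (Fin M → ℝ)) : Convex ℝ (polarSet S) := by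
  intro y hy z hz a b ha hb hab
  intro l hl
  have h1 := hy l hl; have h2 := hz l hl
  have : ∑ i, l i * (a • y + b • z) i = a * ∑ i, l i * y i + b * ∑ i, l i * z i := by
    rw [Finset.mul_sum, Finset.mul_sum, ← Finset.sum_add_distrib]
    refine Finset.sum_congr rfl fun i _ => ?_
    simp [Pi.add_apply, Pi.smul_apply, smul_eq_mul]; ring
  rw [this]
  nlinarith
lemma isClosed_polarSet {M : ℕ} (S : Set (Fin M → ℝ)) : IsClosed (polarSet S) := by
  have : polarSet S = ⋂ l ∈ S, {y : Fin M → ℝ | -1 ≤ ∑ i, l i * y i} := by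
    ext y; simp [polarSet]
  rw [this]
  refine isClosed_biInter fun l _ => isClosed_le continuous_const ?_
  exact continuous_finset_sum _ fun i _ => (continuous_const.mul (continuous_apply i))

lemma zero_mem_polarSet {M : ℕ} (S : Set (Fin M → ℝ)) : (0 : Fin M → ℝ) ∈ polarSet S := by
  intro l hl; simp

lemma polarSet_antitone {M : ℕ} {S S' : Set (Fin M → ℝ)} (h : S ⊆ S') :
    polarSet S' ⊆ polarSet S := fun y hy l hl => hy l (h hl)

lemma subset_bipolar {M : ℕ} (S : Set (Fin M → ℝ)) : S ⊆ polarSet (polarSet S) := by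
  intro s hs y hy
  have h1 := hy s hs
  calc (-1:ℝ) ≤ ∑ i, s i * y i := h1
    _ = ∑ i, y i * s i := Finset.sum_congr rfl fun i _ => mul_comm _ _

/-- The bipolar theorem for closed convex sets containing the origin. -/
lemma bipolar_eq {M : ℕ} {Q : Set (Fin M → ℝ)} (hQ : Convex ℝ Q) (hQc : IsClosed Q)
    (h0 : (0 : Fin M → ℝ) ∈ Q) : polarSet (polarSet Q) = Q := by
  refine subset_antisymm ?_ (subset_bipolar Q)
  intro m hm
  by_contra hmQ
  obtain ⟨v, hv1, hv2⟩ := sep_lemma hQ hQc h0 hmQ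
  have hvP : v ∈ polarSet Q := hv1
  have hcomm : ∑ i, v i * m i = ∑ i, m i * v i := Finset.sum_congr rfl fun i _ => mul_comm _ _
  linarith [hm v hvP]

lemma polarSet_convexHull {M : ℕ} (S : Set (Fin M → ℝ)) :
    polarSet (convexHull ℝ S) = polarSet S := by
  refine subset_antisymm (polarSet_antitone (subset_convexHull ℝ S)) ?_
  intro y hy l hl
  have hhull : convexHull ℝ S ⊆ {z : Fin M → ℝ | -1 ≤ ∑ i, z i * y i} :=
    convexHull_min (fun s hs => hy s hs) (convex_pairing_halfspace y)
  exact hhull hl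

/-- The convex hull of a compact subset of `ℝ^M` is compact (Carathéodory). -/
lemma isCompact_convexHull_of_isCompact {M : ℕ} {s : Set (Fin M → ℝ)} (hs : IsCompact s) :
    IsCompact (convexHull ℝ s) := by
  classical
  set F : Fin (M + 2) → Set (Fin M → ℝ) := fun d =>
    (fun p : (Fin d → ℝ) × (Fin d → (Fin M → ℝ)) => ∑ i, p.1 i • p.2 i) ''
      (stdSimplex ℝ (Fin d) ×ˢ Set.univ.pi fun _ => s) with hF
  have hFc : ∀ d, IsCompact (F d) := by
    intro d
    refine IsCompact.image ?_ ?_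
    · exact (isCompact_stdSimplex _ _).prod (isCompact_univ_pi fun _ => hs)
    · exact continuous_finset_sum _ fun i _ =>
        ((continuous_apply i).comp continuous_fst).smul ((continuous_apply i).comp continuous_snd)
  have key : convexHull ℝ s = ⋃ d, F d := by
    apply Set.Subset.antisymm
    · intro x hx
      obtain ⟨ι, hι, z, w, hzs, hai, hw0, hw1, hwz⟩ := eq_pos_convex_span_of_mem_convexHull hx
      have hcard : Fintype.card ι ≤ M + 1 := by
        rcases isEmpty_or_nonempty ι with h | h
        · simp [Fintype.card_eq_zero]
        · have h1 := hai.finrank_vectorSpan_add_one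
          have h2 : Module.finrank ℝ (vectorSpan ℝ (Set.range z)) ≤ M := by
            simpa using Submodule.finrank_le (vectorSpan ℝ (Set.range z))
          omega
      set d : ℕ := Fintype.card ι with hd
      have hdlt : d < M + 2 := by omega
      set e := Fintype.equivFin ι
      refine Set.mem_iUnion.2 ⟨⟨d, hdlt⟩, ?_⟩
      refine ⟨(fun j => w (e.symm j), fun j => z (e.symm j)), ⟨⟨?_, ?_⟩, ?_⟩, ?_⟩
      · exact fun j => (hw0 _).le
      · rw [Equiv.sum_comp e.symm w]; exact hw1
      · exact fun j _ => hzs ⟨_, rfl⟩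
      · simpa using (Equiv.sum_comp e.symm fun i => w i • z i).trans hwz
    · refine Set.iUnion_subset fun d => ?_
      rintro x ⟨⟨ws, zs⟩, ⟨⟨hw0, hw1⟩, hz⟩, rfl⟩
      exact (convex_convexHull ℝ s).sum_mem (fun i _ => hw0 i) hw1
        (fun i _ => subset_convexHull ℝ s (hz i (Set.mem_univ i)))
  rw [key]
  exact isCompact_iUnion hFc

/-- Multivariate polynomials uniformly approximate continuous functions on compact sets
(Stone–Weierstrass). -/
lemma poly_dense {n : ℕ} {B : Set (Fin n → ℝ)} (hB : IsCompact B)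
    {g : (Fin n → ℝ) → ℝ} (hg : Continuous g) {δ : ℝ} (hδ : 0 < δ) :
    ∃ p : MvPolynomial (Fin n) ℝ, ∀ x ∈ B, |eval x p - g x| < δ := by
  haveI : CompactSpace B := isCompact_iff_compactSpace.mp hB
  set coords : Fin n → C(B, ℝ) := fun i =>
    ⟨fun x => x.1 i, (continuous_apply i).comp continuous_subtype_val⟩ with hcoords
  have heval : ∀ (q : MvPolynomial (Fin n) ℝ) (z : B),
      (MvPolynomial.aeval coords q) z = eval z.1 q := by
    intro q z
    induction q using MvPolynomial.induction_on with
    | C r => simp [hcoords]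
    | add p q hpp hqq => simp [hpp, hqq]
    | mul_X p i hpp => rw [map_mul, ContinuousMap.mul_apply, hpp]; simp [hcoords]
  set A : Subalgebra ℝ C(B, ℝ) := (MvPolynomial.aeval coords).range with hA
  have hsep : A.SeparatesPoints := by
    intro x y hxy
    have : ∃ i, x.1 i ≠ y.1 i := by
      by_contra h
      push_neg at h
      exact hxy (Subtype.ext (funext h))
    obtain ⟨i, hi⟩ := this
    refine ⟨fun z => (coords i) z, ⟨coords i, ⟨X i, by simp⟩, rfl⟩, hi⟩
  obtain ⟨a, ha⟩ := ContinuousMap.exists_mem_subalgebra_near_continuous_of_separatesPoints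
    A hsep (fun x : B => g x) (hg.comp continuous_subtype_val) δ hδ
  obtain ⟨p, hp⟩ := a.2
  refine ⟨p, fun x hx => ?_⟩
  have h2 := ha ⟨x, hx⟩
  have h3 : ((a : C(B, ℝ)) : B → ℝ) ⟨x, hx⟩ = eval x p := by
    rw [← hp]; exact heval p ⟨x, hx⟩
  rw [h3] at h2
  simpa [Real.norm_eq_abs] using h2

section QsetLemmas

variable {n M : ℕ} {B : Set (Fin n → ℝ)} {μ : Measure (Fin n → ℝ)}
  {T : Fin M → MvPolynomial (Fin n) ℝ}

lemma my_integrableOn (hB : IsCompact B) [IsFiniteMeasure μ] {f : (Fin n → ℝ) → ℝ}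
    (hf : Continuous f) : IntegrableOn f B μ :=
  hf.continuousOn.integrableOn_compact hB

lemma integral_decomp (hB : IsCompact B) [IsFiniteMeasure μ]
    (l : Fin M → ℝ) (a : MvPolynomial (Fin n) ℝ) :
    ∫ x in B, (1 + ∑ i, l i * eval x (T i)) * (eval x a) ^ 2 ∂μ
      = (∫ x in B, (eval x a) ^ 2 ∂μ)
        + ∑ i, l i * ∫ x in B, eval x (T i) * (eval x a) ^ 2 ∂μ := by
  have h1 : ∀ x : Fin n → ℝ, (1 + ∑ i, l i * eval x (T i)) * (eval x a) ^ 2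
      = (eval x a) ^ 2 + ∑ i, l i * (eval x (T i) * (eval x a) ^ 2) := by
    intro x
    rw [add_mul, one_mul, Finset.sum_mul]
    congr 1
    exact Finset.sum_congr rfl fun i _ => mul_assoc _ _ _
  simp_rw [h1]
  rw [integral_add (f := fun x => (eval x a) ^ 2)
    (g := fun x => ∑ i, l i * (eval x (T i) * (eval x a) ^ 2)) (my_integrableOn hB ((MvPolynomial.continuous_eval a).pow 2))
    (integrable_finset_sum _ fun i _ => (my_integrableOn hB
      (continuous_const.mul ((MvPolynomial.continuous_eval (T i)).mul
        ((MvPolynomial.continuous_eval a).pow 2)))))]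
  rw [integral_finset_sum (f := fun i x => l i * (eval x (T i) * (eval x a) ^ 2)) _ fun i _ => (my_integrableOn hB
      (continuous_const.mul ((MvPolynomial.continuous_eval (T i)).mul
        ((MvPolynomial.continuous_eval a).pow 2))))]
  congr 1
  exact Finset.sum_congr rfl fun i _ => integral_const_mul _ _

lemma convex_Qset (hB : IsCompact B) [IsFiniteMeasure μ] (k : ℕ) :
    Convex ℝ (Qset B μ T k) := by
  intro l₁ h₁ l₂ h₂ p q hp hq hpq
  intro a ha
  rw [integral_decomp hB _ a]
  have e1 := h₁ a ha
  have e2 := h₂ a ha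
  rw [integral_decomp hB l₁ a] at e1
  rw [integral_decomp hB l₂ a] at e2
  have hsum : ∑ i, (p • l₁ + q • l₂) i * ∫ x in B, eval x (T i) * (eval x a) ^ 2 ∂μ
      = p * (∑ i, l₁ i * ∫ x in B, eval x (T i) * (eval x a) ^ 2 ∂μ)
        + q * (∑ i, l₂ i * ∫ x in B, eval x (T i) * (eval x a) ^ 2 ∂μ) := by
    rw [Finset.mul_sum, Finset.mul_sum, ← Finset.sum_add_distrib]
    refine Finset.sum_congr rfl fun i _ => ?_
    simp only [Pi.add_apply, Pi.smul_apply, smul_eq_mul]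
    ring
  rw [hsum]
  set C := ∫ x in B, (eval x a) ^ 2 ∂μ with hC
  set S1 := ∑ i, l₁ i * ∫ x in B, eval x (T i) * (eval x a) ^ 2 ∂μ with hS1
  set S2 := ∑ i, l₂ i * ∫ x in B, eval x (T i) * (eval x a) ^ 2 ∂μ with hS2
  have hadd := add_nonneg (mul_nonneg hp e1) (mul_nonneg hq e2)
  have hexp : p * (C + S1) + q * (C + S2) = (p + q) * C + (p * S1 + q * S2) := by ring
  rw [hexp, hpq, one_mul] at hadd
  linarith
lemma isClosed_Qset (hB : IsCompact B) [IsFiniteMeasure μ] (k : ℕ) :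
    IsClosed (Qset B μ T k) := by
  have h1 : Qset B μ T k = ⋂ (a : MvPolynomial (Fin n) ℝ) (_ : a.totalDegree ≤ k),
      {l : Fin M → ℝ | 0 ≤ ∫ x in B, (1 + ∑ i, l i * eval x (T i)) * (eval x a) ^ 2 ∂μ} := by
    ext l; simp [Qset]
  rw [h1]
  refine isClosed_iInter fun a => isClosed_iInter fun ha => ?_
  have heq : {l : Fin M → ℝ | 0 ≤ ∫ x in B, (1 + ∑ i, l i * eval x (T i)) * (eval x a) ^ 2 ∂μ}
      = {l : Fin M → ℝ | 0 ≤ (∫ x in B, (eval x a) ^ 2 ∂μ)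
        + ∑ i, l i * ∫ x in B, eval x (T i) * (eval x a) ^ 2 ∂μ} := by
    ext l; rw [Set.mem_setOf_eq, Set.mem_setOf_eq, integral_decomp hB l a]
  rw [heq]
  refine isClosed_le continuous_const ?_
  exact continuous_const.add (continuous_finset_sum _ fun i _ =>
    (continuous_apply i).mul continuous_const)

lemma zero_mem_Qset (hB : IsCompact B) [IsFiniteMeasure μ] (k : ℕ) :
    (0 : Fin M → ℝ) ∈ Qset B μ T k := by
  intro a ha
  refine setIntegral_nonneg hB.isClosed.measurableSet fun x _ => ?_
  simp only [Pi.zero_apply, zero_mul, Finset.sum_const_zero, add_zero, one_mul]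
  positivity

lemma Qset_antitone (k k' : ℕ) (h : k ≤ k') : Qset B μ T k' ⊆ Qset B μ T k :=
  fun l hl a ha => hl a (ha.trans h)

lemma core_lemma (hB : IsCompact B) [IsFiniteMeasure μ] (hμB : μ Bᶜ = 0)
    (hsupp : ∀ U : Set (Fin n → ℝ), IsOpen U → (U ∩ B).Nonempty → 0 < μ U)
    {l : Fin M → ℝ} (hl : ∀ k, l ∈ Qset B μ T k) :
    ∀ x ∈ B, 0 ≤ 1 + ∑ i, l i * eval x (T i) := by
  set f : (Fin n → ℝ) → ℝ := fun x => 1 + ∑ i, l i * eval x (T i) with hf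
  have hfc : Continuous f := continuous_const.add (continuous_finset_sum _ fun i _ =>
    continuous_const.mul (MvPolynomial.continuous_eval (T i)))
  by_contra hcon
  push_neg at hcon
  obtain ⟨x₀, hx₀B, hx₀⟩ := hcon
  have hfx₀ : f x₀ < 0 := hx₀
  set ε : ℝ := -(f x₀) / 3 with hε
  have hεpos : 0 < ε := by rw [hε]; linarith
  set V := f ⁻¹' (Set.Iio (-(2 * ε))) with hV
  have hVopen : IsOpen V := isOpen_Iio.preimage hfc
  have hx₀V : x₀ ∈ V := by
    show f x₀ < -(2 * ε)
    rw [hε]; linarith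
  have hμV : 0 < μ V := hsupp V hVopen ⟨x₀, hx₀V, hx₀B⟩
  have hμVB : 0 < μ (V ∩ B) := by
    have hsub : V ⊆ (V ∩ B) ∪ Bᶜ := by
      intro x hx
      by_cases hxB : x ∈ B
      · exact Or.inl ⟨hx, hxB⟩
      · exact Or.inr hxB
    have h1 : μ V ≤ μ (V ∩ B) := by
      calc μ V ≤ μ ((V ∩ B) ∪ Bᶜ) := measure_mono hsub
        _ ≤ μ (V ∩ B) + μ Bᶜ := measure_union_le _ _
        _ = μ (V ∩ B) := by rw [hμB, add_zero]
    exact hμV.trans_le h1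
  set c : ℝ := ε * (μ (V ∩ B)).toReal with hc
  have hcpos : 0 < c := mul_pos hεpos (ENNReal.toReal_pos hμVB.ne' (measure_ne_top μ _))
  set g : (Fin n → ℝ) → ℝ := fun x => min 1 (max 0 (-(f x) / ε - 1)) with hg
  have hgc : Continuous g :=
    continuous_const.min (continuous_const.max ((hfc.neg.div_const ε).sub continuous_const))
  have hg0 : ∀ x, 0 ≤ g x := fun x => le_min zero_le_one (le_max_left _ _)
  have hg1 : ∀ x, g x ≤ 1 := fun x => min_le_left _ _
  have hgV : ∀ x ∈ V, g x = 1 := by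
    intro x hx
    have hfx : f x < -(2 * ε) := hx
    have h2 : (1 : ℝ) ≤ -(f x) / ε - 1 := by
      rw [le_sub_iff_add_le, le_div_iff₀ hεpos]; linarith
    exact min_eq_left (h2.trans (le_max_right _ _))
  have hfg : ∀ x, f x * (g x) ^ 2 ≤ Set.indicator V (fun _ => -ε) x := by
    intro x
    by_cases hx : x ∈ V
    · rw [Set.indicator_of_mem hx, hgV x hx]
      have hfx : f x < -(2 * ε) := hx
      nlinarith
    · rw [Set.indicator_of_notMem hx]
      rcases eq_or_lt_of_le (hg0 x) with h | h
      · rw [← h]; simp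
      · have h1 : 0 < max 0 (-(f x) / ε - 1) := lt_of_lt_of_le h (min_le_right _ _)
        have h2 : 0 < -(f x) / ε - 1 := by
          rcases lt_max_iff.1 h1 with h' | h'
          · exact absurd h' (lt_irrefl 0)
          · exact h'
        have h3 : f x < 0 := by
          have h4 : (1 : ℝ) < -(f x) / ε := by linarith
          rw [lt_div_iff₀ hεpos] at h4; linarith
        exact mul_nonpos_of_nonpos_of_nonneg h3.le (sq_nonneg _)
  have hmeasB : MeasurableSet B := hB.isClosed.measurableSet
  have hint1 : IntegrableOn (fun x => f x * (g x) ^ 2) B μ := my_integrableOn hB (hfc.mul (hgc.pow 2))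
  have hint2 : IntegrableOn (Set.indicator V (fun _ => -ε)) B μ :=
    (integrable_const (-ε)).indicator hVopen.measurableSet
  have hIg : ∫ x in B, f x * (g x) ^ 2 ∂μ ≤ -c := by
    calc ∫ x in B, f x * (g x) ^ 2 ∂μ
        ≤ ∫ x in B, Set.indicator V (fun _ => -ε) x ∂μ :=
          setIntegral_mono_on hint1 hint2 hmeasB (fun x _ => hfg x)
      _ = (μ.restrict B V).toReal • (-ε) := integral_indicator_const (-ε) hVopen.measurableSet
      _ = -c := by
          rw [Measure.restrict_apply hVopen.measurableSet, smul_eq_mul, hc]; ring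
  obtain ⟨Cf, hCf⟩ := hB.exists_bound_of_continuousOn hfc.continuousOn
  have hCf0 : 0 ≤ Cf := le_trans (norm_nonneg (f x₀)) (hCf x₀ hx₀B)
  set mB : ℝ := (μ B).toReal with hmB
  have hmB0 : 0 ≤ mB := ENNReal.toReal_nonneg
  set δ : ℝ := min 1 (c / (3 * (Cf + 1) * (mB + 1))) with hδ
  have hδpos : 0 < δ := lt_min one_pos (div_pos hcpos (by positivity))
  have hδ1 : δ ≤ 1 := min_le_left _ _
  obtain ⟨p, hp⟩ := poly_dense hB hgc hδpos
  have hpt : ∀ x ∈ B, f x * (eval x p) ^ 2 ≤ f x * (g x) ^ 2 + 3 * (Cf + 1) * δ := by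
    intro x hx
    have h1 : |eval x p - g x| < δ := hp x hx
    have h2 : |f x| ≤ Cf := by simpa [Real.norm_eq_abs] using hCf x hx
    have h3 : |g x| ≤ 1 := abs_le.2 ⟨by linarith [hg0 x], hg1 x⟩
    have h4 : |eval x p + g x| ≤ 2 + δ := by
      have h4a := abs_add_le (eval x p - g x) (2 * g x)
      have heq : eval x p - g x + 2 * g x = eval x p + g x := by ring
      rw [heq] at h4a
      have h5 : |2 * g x| ≤ 2 := by rw [abs_mul, abs_two]; linarith
      linarith
    have key : f x * (eval x p) ^ 2 - f x * (g x) ^ 2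
        = f x * ((eval x p - g x) * (eval x p + g x)) := by ring
    have h5 : |f x * ((eval x p - g x) * (eval x p + g x))| ≤ Cf * (δ * (2 + δ)) := by
      rw [abs_mul, abs_mul]
      have hb1 : |eval x p - g x| * |eval x p + g x| ≤ δ * (2 + δ) :=
        mul_le_mul h1.le h4 (abs_nonneg _) hδpos.le
      exact mul_le_mul h2 hb1 (by positivity) hCf0
    have h6 : Cf * (δ * (2 + δ)) ≤ 3 * (Cf + 1) * δ := by
      nlinarith [mul_nonneg (mul_nonneg hCf0 hδpos.le) (sub_nonneg.2 hδ1), hδpos.le]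
    have h7 := (abs_le.1 h5).2
    linarith [key ▸ h7]
  have hInt : ∫ x in B, f x * (eval x p) ^ 2 ∂μ ≤ -c + 3 * (Cf + 1) * δ * mB := by
    have hintp : IntegrableOn (fun x => f x * (eval x p) ^ 2) B μ :=
      my_integrableOn hB (hfc.mul ((MvPolynomial.continuous_eval p).pow 2))
    calc ∫ x in B, f x * (eval x p) ^ 2 ∂μ
        ≤ ∫ x in B, (f x * (g x) ^ 2 + 3 * (Cf + 1) * δ) ∂μ := by
          apply setIntegral_mono_on hintp (hint1.add (integrable_const _)) hmeasB
          intro x hx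
          exact hpt x hx
      _ = (∫ x in B, f x * (g x) ^ 2 ∂μ) + (3 * (Cf + 1) * δ) * mB := by
          rw [integral_add hint1 (integrable_const _), integral_const,
            measureReal_restrict_apply_univ, smul_eq_mul, hmB, measureReal_def]
          ring
      _ ≤ -c + 3 * (Cf + 1) * δ * mB := by linarith
  have hfinal : ∫ x in B, f x * (eval x p) ^ 2 ∂μ < 0 := by
    have hδle : δ ≤ c / (3 * (Cf + 1) * (mB + 1)) := min_le_right _ _
    have h6 : δ * (3 * (Cf + 1) * (mB + 1)) ≤ c := (le_div_iff₀ (by positivity)).1 hδle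
    have h7 : 3 * (Cf + 1) * δ * mB < c := by nlinarith
    linarith
  have h0 := hl p.totalDegree p le_rfl
  have heq : ∫ x in B, (1 + ∑ i, l i * eval x (T i)) * (eval x p) ^ 2 ∂μ
      = ∫ x in B, f x * (eval x p) ^ 2 ∂μ := by simp only [hf]
  rw [heq] at h0
  linarith

end QsetLemmas

/-- Let `B ⊆ ℝⁿ` be compact, `m` a finite Borel measure supported exactly on `B`, and
`T : ℝⁿ → ℝ^M` a polynomial map with `0` in the convex hull of `T(B)`.  Then the convex
hull of `T(B)` equals the closure of `⋃ₖ Q_k°`. -/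
theorem convexHull_eq_closure_union_polars {n M : ℕ}
    (B : Set (Fin n → ℝ)) (hB : IsCompact B)
    (μ : Measure (Fin n → ℝ)) [IsFiniteMeasure μ]
    (hμB : μ Bᶜ = 0)
    (hsupp : ∀ U : Set (Fin n → ℝ), IsOpen U → (U ∩ B).Nonempty → 0 < μ U)
    (T : Fin M → MvPolynomial (Fin n) ℝ)
    (h0 : (0 : Fin M → ℝ) ∈ convexHull ℝ ((fun x i => eval x (T i)) '' B)) :
    convexHull ℝ ((fun (x : Fin n → ℝ) (i : Fin M) => eval x (T i)) '' B) =
      closure (⋃ k : ℕ, polarSet (Qset B μ T k)) := by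
  classical
  set Tm : (Fin n → ℝ) → (Fin M → ℝ) := fun x i => eval x (T i) with hTm
  set K : Set (Fin M → ℝ) := convexHull ℝ (Tm '' B) with hK
  have hTmc : Continuous Tm := continuous_pi fun i => MvPolynomial.continuous_eval (T i)
  have hKcomp : IsCompact K := isCompact_convexHull_of_isCompact (hB.image hTmc)
  have hKclosed : IsClosed K := hKcomp.isClosed
  have hKconv : Convex ℝ K := convex_convexHull ℝ _
  have h0K : (0 : Fin M → ℝ) ∈ K := h0
  have hpolarK : polarSet K = polarSet (Tm '' B) := polarSet_convexHull _
  have hbipK : polarSet (polarSet K) = K := bipolar_eq hKconv hKclosed h0K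
  have hQsub : ∀ k, polarSet (Tm '' B) ⊆ Qset B μ T k := by
    intro k l hl a ha
    refine setIntegral_nonneg hB.isClosed.measurableSet fun x hx => ?_
    have h1 : -1 ≤ ∑ i, Tm x i * l i := hl (Tm x) ⟨x, hx, rfl⟩
    have h2 : ∑ i, Tm x i * l i = ∑ i, l i * eval x (T i) :=
      Finset.sum_congr rfl fun i _ => mul_comm _ _
    rw [h2] at h1
    have h3 : 0 ≤ 1 + ∑ i, l i * eval x (T i) := by linarith
    exact mul_nonneg h3 (sq_nonneg _)
  have hpolar_sub : ∀ k, polarSet (Qset B μ T k) ⊆ K := by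
    intro k
    have h1 : polarSet (Qset B μ T k) ⊆ polarSet (polarSet (Tm '' B)) :=
      polarSet_antitone (hQsub k)
    have h2 : polarSet (polarSet (Tm '' B)) = K := by rw [← hpolarK, hbipK]
    exact h2 ▸ h1
  refine subset_antisymm ?_ (closure_minimal (Set.iUnion_subset fun k => hpolar_sub k) hKclosed)
  intro y hy
  by_contra hyC
  set C := closure (⋃ k, polarSet (Qset B μ T k)) with hC
  have hCclosed : IsClosed C := isClosed_closure
  have hCconv : Convex ℝ C := by
    refine Convex.closure ?_
    intro u hu v hv p q hp hq hpq
    rw [Set.mem_iUnion] at hu hv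
    obtain ⟨j, hj⟩ := hu
    obtain ⟨k, hk⟩ := hv
    have hj' : u ∈ polarSet (Qset B μ T (max j k)) :=
      polarSet_antitone (Qset_antitone _ _ (le_max_left j k)) hj
    have hk' : v ∈ polarSet (Qset B μ T (max j k)) :=
      polarSet_antitone (Qset_antitone _ _ (le_max_right j k)) hk
    exact Set.mem_iUnion.2 ⟨max j k, convex_polarSet _ hj' hk' hp hq hpq⟩
  have h0C : (0 : Fin M → ℝ) ∈ C := subset_closure (Set.mem_iUnion.2 ⟨0, zero_mem_polarSet _⟩)
  obtain ⟨v, hv1, hv2⟩ := sep_lemma hCconv hCclosed h0C hyC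
  have hvQ : ∀ k, v ∈ Qset B μ T k := by
    intro k
    rw [← bipolar_eq (convex_Qset hB k) (isClosed_Qset hB k) (zero_mem_Qset hB k)]
    intro q hq
    exact hv1 q (subset_closure (Set.mem_iUnion.2 ⟨k, hq⟩))
  have hcore := core_lemma hB hμB hsupp hvQ
  have hKH : K ⊆ {z : Fin M → ℝ | -1 ≤ ∑ i, z i * v i} := by
    refine convexHull_min ?_ (convex_pairing_halfspace v)
    rintro z ⟨x, hx, rfl⟩
    have h1 := hcore x hx
    have h2 : ∑ i, Tm x i * v i = ∑ i, v i * eval x (T i) :=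
      Finset.sum_congr rfl fun i _ => mul_comm _ _
    simp only [Set.mem_setOf_eq]
    rw [h2]
    linarith
  have h3 := hKH hy
  simp only [Set.mem_setOf_eq] at h3
  linarith
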